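/- arXiv:1404.7700 — 4 statements merged into one kernel-verified Lean document; each statement's English description precedes it below -/
import Mathlib

section
/- Let G be a group and let w ∈ G satisfy w² = 1. Let g, h ∈ G satisfy w·g·w = g⁻¹ and w·h·w = h⁻¹. Put f = g·h and k = f⁻¹ · w · f · w, and suppose that k has finite odd order m. If f · k^((m+1)/2) = 1, then g·h = h·g. -/
/-- Let `w` be an element with `w² = 1` in a group `G`, let `g, h ∈ G` be inverted by
conjugation by `w`, set `f = g * h` and `k = f⁻¹ * w * f * w`, and suppose `k` has finite
odd order `m`. If `f * k ^ ((m + 1) / 2) = 1` then `g` and `h` commute. -/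
theorem zeta_trivial_implies_commute {G : Type*} [Group G] (w g h : G) (hw : w ^ 2 = 1)
    (hg : w * g * w = g⁻¹) (hh : w * h * w = h⁻¹) (m : ℕ) (hm : Odd m)
    (hk : orderOf ((g * h)⁻¹ * w * (g * h) * w) = m)
    (hz : (g * h) * ((g * h)⁻¹ * w * (g * h) * w) ^ ((m + 1) / 2) = 1) :
    g * h = h * g := by
  have hw' : w * w = 1 := by rw [← sq]; exact hw
  set f := g * h with hf
  set k := f⁻¹ * w * f * w with hkdef
  set n := (m + 1) / 2 with hn
  have hnn : n + n = m + 1 := by obtain ⟨j, hj⟩ := hm; omega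
  have hkm : k ^ m = 1 := by rw [← hk]; exact pow_orderOf_eq_one _
  have hfk : f = (k ^ n)⁻¹ := by rw [eq_inv_iff_mul_eq_one]; exact hz
  have h2 : k ^ (n + n) = k := by rw [hnn, pow_succ, hkm, one_mul]
  have hfk2 : f * k = f⁻¹ := by
    rw [hfk, inv_inv, inv_mul_eq_iff_eq_mul, ← pow_add, h2]
  have hwfw : w * f * w = f * k := by
    rw [hkdef]; group
  have hwfw2 : w * f * w = g⁻¹ * h⁻¹ := by
    have step : w * f * w = (w * g * w) * (w * h * w) := by
      rw [hf, show (w * g * w) * (w * h * w) = (w * g) * (w * w) * (h * w) from by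
        simp [mul_assoc], hw']
      simp [mul_assoc]
    rw [step, hg, hh]
  have key : g⁻¹ * h⁻¹ = h⁻¹ * g⁻¹ := by
    rw [← hwfw2, hwfw, hfk2, hf, mul_inv_rev]
  have : (h * g)⁻¹ = (g * h)⁻¹ := by rw [mul_inv_rev, mul_inv_rev, key]
  exact (inv_injective this).symm
end

section
/- Let F be a finite field of characteristic 2, let a and b be two distinct points of the projective line ℙ¹(F), and let w ∈ SL₂(F) satisfy w•a = b and w•b = a. Then w² = 1. -/
open Matrix

namespace SL2ProjAction

variable {F : Type*} [Field F]

theorem toLin'_coe_injective (g : SpecialLinearGroup (Fin 2) F) :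
    Function.Injective (Matrix.toLin' (g : Matrix (Fin 2) (Fin 2) F)) := by
  apply Function.LeftInverse.injective
    (g := Matrix.toLin' ((g⁻¹ : SpecialLinearGroup (Fin 2) F) : Matrix (Fin 2) (Fin 2) F))
  intro v
  rw [← Matrix.toLin'_mul_apply, ← Matrix.SpecialLinearGroup.coe_mul, inv_mul_cancel,
    Matrix.SpecialLinearGroup.coe_one, Matrix.toLin'_one, LinearMap.id_apply]

/-- The natural action of `SL₂(F)` on the projective line `ℙ¹(F)`, induced by the linear
action of `SL₂(F)` on `F²`. -/
noncomputable instance : MulAction (SpecialLinearGroup (Fin 2) F)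
    (Projectivization F (Fin 2 → F)) where
  smul g p := Projectivization.map (Matrix.toLin' (g : Matrix (Fin 2) (Fin 2) F))
    (toLin'_coe_injective g) p
  one_smul p := by
    show Projectivization.map _ _ p = p
    induction p using Projectivization.ind with
    | h v hv =>
      rw [Projectivization.map_mk]
      congr 1
      simp
  mul_smul g h p := by
    show Projectivization.map _ _ p = Projectivization.map _ _ (Projectivization.map _ _ p)
    induction p using Projectivization.ind with
    | h v hv =>
      rw [Projectivization.map_mk, Projectivization.map_mk, Projectivization.map_mk]
      congr 1
      simp [Matrix.SpecialLinearGroup.coe_mul, Matrix.toLin'_mul]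

end SL2ProjAction


theorem smul_mk_aux {F : Type*} [Field F] (g : SpecialLinearGroup (Fin 2) F)
    (u : Fin 2 → F) (hu : u ≠ 0) :
    g • Projectivization.mk F u hu =
      Projectivization.mk F (Matrix.toLin' (g : Matrix (Fin 2) (Fin 2) F) u)
        (by
          intro h
          exact hu (SL2ProjAction.toLin'_coe_injective g (by simpa using h))) := by
  show Projectivization.map _ _ _ = _
  rw [Projectivization.map_mk]

/-- Over a finite field `F` of characteristic 2, any element of `SL₂(F)` that swaps two
distinct points of the projective line is an involution. -/
theorem swap_two_points_involution_char_two {F : Type*} [Field F] [Fintype F] [CharP F 2]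
    (a b : Projectivization F (Fin 2 → F)) (hab : a ≠ b)
    (w : SpecialLinearGroup (Fin 2) F) (hwa : w • a = b) (hwb : w • b = a) :
    w ^ 2 = 1 := by
  induction a using Projectivization.ind with | h u hu =>
  induction b using Projectivization.ind with | h v hv =>
  set T : (Fin 2 → F) →ₗ[F] (Fin 2 → F) :=
    Matrix.toLin' (w : Matrix (Fin 2) (Fin 2) F) with hT
  rw [smul_mk_aux, Projectivization.mk_eq_mk_iff'] at hwa hwb
  obtain ⟨c, hc⟩ := hwa
  obtain ⟨d, hd⟩ := hwb
  rw [← hT] at hc hd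
  -- u, v are linearly independent
  have hli : LinearIndependent F ![v, u] := by
    rw [LinearIndependent.pair_iff' hv]
    intro r hr
    exact hab (((Projectivization.mk_eq_mk_iff' F u v hu hv).2 ⟨r, hr⟩))
  have hcard : Fintype.card (Fin 2) = Module.finrank F (Fin 2 → F) := by simp
  let B : Module.Basis (Fin 2) F (Fin 2 → F) := basisOfLinearIndependentOfCardEqFinrank hli hcard
  have hB : ⇑B = ![v, u] := coe_basisOfLinearIndependentOfCardEqFinrank hli hcard
  set e : F := d * c with he
  -- T ∘ T = e • id
  have hTT : T ∘ₗ T = e • LinearMap.id := by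
    apply Module.Basis.ext B
    intro i
    rw [hB]
    fin_cases i
    · show T (T v) = e • v
      rw [← hd, _root_.map_smul, ← hc, smul_smul, he, mul_comm]
    · show T (T u) = e • u
      rw [← hc, _root_.map_smul, ← hd, smul_smul, he, mul_comm]
  -- determinant
  have hdet : LinearMap.det (T ∘ₗ T) = 1 := by
    rw [LinearMap.det_comp, hT, LinearMap.det_toLin', w.2, one_mul]
  rw [hTT] at hdet
  have h2 : Module.finrank F (Fin 2 → F) = 2 := by simp
  rw [LinearMap.det_smul, LinearMap.det_id, mul_one, h2] at hdet
  have he1 : e = 1 := by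
    have h2' : (2 : F) = 0 := by simpa using (CharP.cast_eq_zero F 2)
    have h0 : (e - 1) ^ 2 = 0 := by
      calc (e - 1) ^ 2 = e ^ 2 - 2 * e + 1 := by ring
        _ = 1 - 2 * e + 1 := by rw [hdet]
        _ = 2 - 2 * e := by ring
        _ = 0 := by rw [h2']; ring
    exact sub_eq_zero.1 (pow_eq_zero_iff (two_ne_zero) |>.1 h0)
  rw [he1, one_smul] at hTT
  have hmat : ((w ^ 2 : SpecialLinearGroup (Fin 2) F) : Matrix (Fin 2) (Fin 2) F) = 1 := by
    have : Matrix.toLin' ((w ^ 2 : SpecialLinearGroup (Fin 2) F) : Matrix (Fin 2) (Fin 2) F)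
        = Matrix.toLin' (1 : Matrix (Fin 2) (Fin 2) F) := by
      rw [pow_two, Matrix.SpecialLinearGroup.coe_mul, Matrix.toLin'_mul, Matrix.toLin'_one]
      exact hTT
    exact Matrix.toLin'.injective this
  ext : 1
  rw [hmat, Matrix.SpecialLinearGroup.coe_one]
end

section
/- Let F be a finite field of odd cardinality and let n ≥ 3. Then the inverse-transpose map x ↦ (xᵀ)⁻¹ on SLₙ(F) is not an inner automorphism: there exists no g ∈ GLₙ(F) such that (xᵀ)⁻¹ = g⁻¹ x g for all x ∈ SLₙ(F). -/
open Matrix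

lemma transvection_transpose' {n : ℕ} {F : Type*} [Field F] (i j : Fin n) (c : F) :
    (Matrix.transvection i j c)ᵀ = Matrix.transvection j i c := by
  ext a b
  simp [Matrix.transvection, Matrix.single, Matrix.one_apply, and_comm, eq_comm]

/-- Over a finite field `F` of odd cardinality and for `n ≥ 3`, the inverse-transpose map
`x ↦ (xᵀ)⁻¹` on `SLₙ(F)` is not an inner automorphism: no `g ∈ GLₙ(F)` conjugates every
element of `SLₙ(F)` to its inverse-transpose. -/
theorem inverse_transpose_not_inner {F : Type*} [Field F] [Fintype F]
    (hodd : Odd (Fintype.card F)) (n : ℕ) (hn : 3 ≤ n) :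
    ¬∃ g : GL (Fin n) F, ∀ x : SpecialLinearGroup (Fin n) F,
      ((x : Matrix (Fin n) (Fin n) F)ᵀ)⁻¹ =
        ((g⁻¹ : GL (Fin n) F) : Matrix (Fin n) (Fin n) F) *
          (x : Matrix (Fin n) (Fin n) F) * (g : Matrix (Fin n) (Fin n) F) := by
  rintro ⟨g, hg⟩
  set G : Matrix (Fin n) (Fin n) F := (g : Matrix (Fin n) (Fin n) F) with hG
  have key : ∀ i j : Fin n, i ≠ j → ∀ k : Fin n, k ≠ i → G k j = 0 := by
    intro i j hij k hk
    have hx := hg ⟨Matrix.transvection i j 1, Matrix.det_transvection_of_ne i j hij 1⟩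
    simp only [SpecialLinearGroup.coe_mk] at hx
    have hxt : ((Matrix.transvection i j (1 : F))ᵀ)⁻¹ = Matrix.transvection j i (-1) := by
      apply Matrix.inv_eq_right_inv
      rw [transvection_transpose', Matrix.transvection_mul_transvection_same _ _ hij.symm]
      simp [Matrix.transvection]
    rw [hxt] at hx
    -- multiply both sides on the left by G
    have hG1 : G * ((g⁻¹ : GL (Fin n) F) : Matrix (Fin n) (Fin n) F) = 1 := by
      exact_mod_cast Units.mul_inv g
    have hmain : G * Matrix.transvection j i (-1) = Matrix.transvection i j 1 * G := by
      rw [hx, ← Matrix.mul_assoc, ← Matrix.mul_assoc, hG1, Matrix.one_mul]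
    have := congrFun (congrFun hmain k) i
    rw [Matrix.mul_transvection_apply_same, Matrix.transvection_mul_apply_of_ne i j k i hk 1 G] at this
    linear_combination (-1 : F) * this
  have h1 : (⟨1, by omega⟩ : Fin n) ≠ ⟨0, by omega⟩ := by simp [Fin.ext_iff]
  have h2 : (⟨2, by omega⟩ : Fin n) ≠ ⟨0, by omega⟩ := by simp [Fin.ext_iff]
  have hcol : ∀ k : Fin n, G k ⟨0, by omega⟩ = 0 := by
    intro k
    by_cases hk : k = ⟨1, by omega⟩
    · exact key ⟨2, by omega⟩ _ h2 k (by simp [hk, Fin.ext_iff])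
    · exact key ⟨1, by omega⟩ _ h1 k hk
  have hdet : G.det = 0 := Matrix.det_eq_zero_of_column_eq_zero _ hcol
  have : IsUnit G.det := (Matrix.isUnit_iff_isUnit_det G).mp g.isUnit
  rw [hdet] at this
  exact this.ne_zero rfl
end

section
/- Let F be a finite field with q elements where q is even (characteristic 2). Then every element x of SL₂(F) has order dividing 2, or order dividing q − 1, or order dividing q + 1. -/
open Matrix Polynomial

private lemma sq_eq_trace_smul_sub' {R : Type*} [CommRing R] (M : Matrix (Fin 2) (Fin 2) R) :
    M ^ 2 = M.trace • M - M.det • 1 := by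
  rw [pow_two]
  ext i j
  fin_cases i <;> fin_cases j <;>
    simp [Matrix.mul_apply, Fin.sum_univ_two, Matrix.trace_fin_two, Matrix.det_fin_two,
      Matrix.one_apply] <;> ring

/-- If `M` satisfies a quadratic with distinct roots `a b` and `a^n = b^n = 1` then `M^n = 1`. -/
private lemma pow_eq_one_of_roots' {K : Type*} [Field K] (M : Matrix (Fin 2) (Fin 2) K)
    (a b : K) (hab : a ≠ b) (hsum : M ^ 2 = (a + b) • M - (a * b) • 1)
    (n : ℕ) (ha : a ^ n = 1) (hb : b ^ n = 1) : M ^ n = 1 := by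
  have hne : a - b ≠ 0 := sub_ne_zero.mpr hab
  set E : Matrix (Fin 2) (Fin 2) K := (a - b)⁻¹ • (M - b • 1) with hE
  set G : Matrix (Fin 2) (Fin 2) K := (a - b)⁻¹ • (a • 1 - M) with hG
  have hEG : E + G = 1 := by
    rw [hE, hG, ← smul_add]
    have : M - b • 1 + (a • 1 - M) = (a - b) • (1 : Matrix (Fin 2) (Fin 2) K) := by
      rw [sub_smul]; abel
    rw [this, smul_smul, inv_mul_cancel₀ hne, one_smul]
  have key1 : M * (M - b • 1) = a • (M - b • 1) := by
    rw [mul_sub, ← pow_two, hsum, mul_smul_comm, mul_one, smul_sub, smul_smul, add_smul]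
    abel
  have key2 : M * (a • 1 - M) = b • (a • 1 - M) := by
    rw [mul_sub, ← pow_two, hsum, mul_smul_comm, mul_one, smul_sub, smul_smul, add_smul,
      mul_comm a b]
    abel
  have hME : M * E = a • E := by
    rw [hE, mul_smul_comm, key1, smul_comm]
  have hMG : M * G = b • G := by
    rw [hG, mul_smul_comm, key2, smul_comm]
  clear hE hG
  clear_value E G
  have hpow : ∀ m : ℕ, M ^ m = a ^ m • E + b ^ m • G := by
    intro m
    induction m with
    | zero => simpa using hEG.symm
    | succ m ih =>
      rw [pow_succ', ih, mul_add, mul_smul_comm, mul_smul_comm, hME, hMG,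
        smul_smul, smul_smul, ← pow_succ, ← pow_succ]
  rw [hpow n, ha, hb, one_smul, one_smul, hEG]

/-- An element of `K` fixed by the `q`-power map lies in the image of the field `F` with `q`
elements. -/
private lemma mem_range_of_pow_card' {F K : Type*} [Field F] [Fintype F] [Field K]
    (φ : F →+* K) (a : K) (ha : a ^ Fintype.card F = a) : ∃ c : F, φ c = a := by
  classical
  by_contra h
  push_neg at h
  set q := Fintype.card F with hqdef
  set P : K[X] := X ^ q - X with hP
  have hPne : P ≠ ⟨0⟩ := FiniteField.X_pow_card_sub_X_ne_zero K Fintype.one_lt_card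
  have hPne' : P ≠ 0 := hPne
  have hS : (insert a (Finset.univ.image φ)) ⊆ P.roots.toFinset := by
    intro y hy
    rw [Multiset.mem_toFinset, Polynomial.mem_roots hPne']
    rcases Finset.mem_insert.mp hy with rfl | hy
    · simp [hP, Polynomial.IsRoot, sub_eq_zero, ha]
    · obtain ⟨c, _, rfl⟩ := Finset.mem_image.mp hy
      simp only [hP, Polynomial.IsRoot, eval_sub, eval_pow, eval_X, sub_eq_zero]
      rw [← map_pow, FiniteField.pow_card]
  have hcard1 : (insert a (Finset.univ.image φ)).card = q + 1 := by
    rw [Finset.card_insert_of_notMem, Finset.card_image_of_injective _ φ.injective,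
      Finset.card_univ]
    intro hmem
    obtain ⟨c, _, hc⟩ := Finset.mem_image.mp hmem
    exact h c hc
  have hle := Finset.card_le_card hS
  have hle2 : P.roots.toFinset.card ≤ q := by
    calc P.roots.toFinset.card ≤ Multiset.card P.roots := P.roots.toFinset_card_le
    _ ≤ P.natDegree := Polynomial.card_roots' P
    _ = q := FiniteField.X_pow_card_sub_X_natDegree_eq K Fintype.one_lt_card
  omega

/-- Over a finite field `F` with `q` elements where `q` is even (characteristic 2), every
element of `SL₂(F)` has order dividing `2`, or dividing `q - 1`, or dividing `q + 1`. -/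
theorem sl2_element_orders_char_two {F : Type*} [Field F] [Fintype F]
    (hq : Even (Fintype.card F)) (x : SpecialLinearGroup (Fin 2) F) :
    orderOf x ∣ 2 ∨ orderOf x ∣ Fintype.card F - 1 ∨ orderOf x ∣ Fintype.card F + 1 := by
  classical
  obtain ⟨p, hp⟩ := CharP.exists F
  haveI := hp
  obtain ⟨n, hpp, hcard⟩ := FiniteField.card F p
  have hp2 : p = 2 := by
    have h2 : (2 : ℕ) ∣ p ^ (n : ℕ) := hcard ▸ hq.two_dvd
    exact ((Nat.prime_dvd_prime_iff_eq Nat.prime_two hpp).mp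
      (Nat.prime_two.dvd_of_dvd_pow h2)).symm
  subst hp2
  haveI : CharP F 2 := hp
  set t : F := Matrix.trace (x : Matrix (Fin 2) (Fin 2) F) with ht
  have hF : (x : Matrix (Fin 2) (Fin 2) F) ^ 2 = t • (x : Matrix (Fin 2) (Fin 2) F) - 1 := by
    rw [sq_eq_trace_smul_sub', x.prop, one_smul, ← ht]
  -- helper: if the underlying matrix power is 1, so is the SL element power
  have hSL : ∀ m : ℕ, (x : Matrix (Fin 2) (Fin 2) F) ^ m = 1 → x ^ m = 1 := by
    intro m hm
    apply Subtype.coe_injective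
    show ((x ^ m : SpecialLinearGroup (Fin 2) F) : Matrix (Fin 2) (Fin 2) F)
      = ((1 : SpecialLinearGroup (Fin 2) F) : Matrix (Fin 2) (Fin 2) F)
    rw [Matrix.SpecialLinearGroup.coe_pow, hm, Matrix.SpecialLinearGroup.coe_one]
  by_cases ht0 : t = 0
  · left
    apply orderOf_dvd_of_pow_eq_one
    apply hSL
    rw [hF, ht0, zero_smul, zero_sub, CharTwo.neg_eq]
  · -- pass to the algebraic closure
    set K := AlgebraicClosure F with hK
    set φ := algebraMap F K with hφdef
    have hφ : Function.Injective φ := φ.injective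
    haveI : CharP K 2 := charP_of_injective_algebraMap hφ 2
    set q := Fintype.card F with hqdef
    -- find a root of X^2 - (φ t) X + 1
    obtain ⟨a, haroot⟩ := IsAlgClosed.exists_root (k := K) (X ^ 2 - C (φ t) * X + 1)
      (by
        have : (X ^ 2 - C (φ t) * X + 1 : K[X]).degree = 2 := by compute_degree!
        simp [this])
    have ha0 : a ^ 2 - φ t * a + 1 = 0 := by
      simpa [Polynomial.IsRoot] using haroot
    have hane : a ≠ 0 := by
      rintro rfl
      simp at ha0
    set b : K := φ t - a with hb
    have hmul : a * b = 1 := by rw [hb]; linear_combination -ha0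
    have hsum : a + b = φ t := by rw [hb]; ring
    have hbne : b ≠ 0 := fun h => by simp [h] at hmul
    have hab : a ≠ b := by
      intro h
      apply ht0
      apply hφ
      rw [map_zero, ← hsum, ← h, CharTwo.add_self_eq_zero]
    -- the matrix over K
    set M : Matrix (Fin 2) (Fin 2) K := (x : Matrix (Fin 2) (Fin 2) F).map φ with hM
    have hMsum : M ^ 2 = (a + b) • M - (a * b) • 1 := by
      rw [hsum, hmul, one_smul]
      have := congrArg (RingHom.mapMatrix φ) hF
      simp only [map_pow, map_sub, _root_.map_one] at this
      have hsmul : (RingHom.mapMatrix φ) (t • (x : Matrix (Fin 2) (Fin 2) F))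
          = φ t • M := by
        ext i j
        simp [RingHom.mapMatrix_apply, Matrix.map_apply, smul_eq_mul, _root_.map_mul, hM]
      rw [hsmul] at this
      rw [hM]
      exact this
    -- from eigenvalue powers to matrix powers to SL powers
    have key : ∀ m : ℕ, a ^ m = 1 → x ^ m = 1 := by
      intro m ham
      have hbm : b ^ m = 1 := by
        have : a ^ m * b ^ m = 1 := by rw [← mul_pow, hmul, one_pow]
        rwa [ham, one_mul] at this
      apply hSL
      have hMm : M ^ m = 1 := pow_eq_one_of_roots' M a b hab hMsum m ham hbm
      have : (RingHom.mapMatrix φ) ((x : Matrix (Fin 2) (Fin 2) F) ^ m)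
          = (RingHom.mapMatrix φ) 1 := by
        rw [map_pow, _root_.map_one]
        exact hMm
      have hinj : Function.Injective (RingHom.mapMatrix φ (m := Fin 2)) := fun A B hAB => by
        ext i j
        exact hφ (congrFun (congrFun (congrArg Matrix.of.symm hAB) i) j)
      exact hinj this
    by_cases hmem : ∃ c : F, φ c = a
    · -- a comes from F : order divides q - 1
      right; left
      obtain ⟨c, rfl⟩ := hmem
      have hc0 : c ≠ 0 := fun h => hane (by rw [h, map_zero])
      apply orderOf_dvd_of_pow_eq_one
      apply key
      rw [← map_pow, FiniteField.pow_card_sub_one_eq_one c hc0, _root_.map_one]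
    · -- a is not in F : then a^q = b, so a^(q+1) = 1
      right; right
      have haq : a ^ q = b := by
        -- a^q is a root of the same quadratic
        haveI : ExpChar K 2 := ExpChar.prime Nat.prime_two
        have hfr := congrArg (iterateFrobenius K 2 (n : ℕ)) ha0
        simp only [map_add, map_sub, _root_.map_mul, map_pow, _root_.map_one, map_zero,
          iterateFrobenius_def] at hfr
        rw [← hcard] at hfr
        have htq : (φ t) ^ q = φ t := by rw [← map_pow, FiniteField.pow_card]
        rw [htq] at hfr
        -- hfr : (a^q)^2 - φ t * a^q + 1 = 0  (possibly with pow order rearranged)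
        have hfact : (a ^ q - a) * (a ^ q - b) = 0 := by
          have h1 : (a ^ q) ^ 2 - φ t * a ^ q + 1 = 0 := by
            rw [← pow_mul, mul_comm q 2, pow_mul]
            convert hfr using 2
            ring
          calc (a ^ q - a) * (a ^ q - b)
              = (a ^ q) ^ 2 - (a + b) * a ^ q + a * b := by ring
            _ = (a ^ q) ^ 2 - φ t * a ^ q + 1 := by rw [hsum, hmul]
            _ = 0 := h1
        rcases mul_eq_zero.mp hfact with h | h
        · exact absurd (mem_range_of_pow_card' φ a (sub_eq_zero.mp h)) hmem
        · exact sub_eq_zero.mp h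
      apply orderOf_dvd_of_pow_eq_one
      apply key
      rw [pow_succ, haq, mul_comm, hmul]
end
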